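/- Let $A, B, K$ be $d \times d$ real matrices, $h \ne 0$ a real number, $l$ a natural number, and let $x, u, \hat w : \mathbb{N} \to \mathbb{R}^d$ and $M : \mathbb{N} \to \mathbb{N} \to \mathbb{R}^{d\times d}$ satisfy, for all $t$, $\hat w_t = \frac{1}{h}\big(x_{t+1} - x_t - h(Ax_t + Bu_t)\big)$, and for all $t \ge l$, $u_t = -K x_t + h\sum_{i=1}^{l} M_t^i \hat w_{t-i}$. Set $Q_h = I + h(A-BK)$ and, for $0 \le i \le 2l$, $\Psi_{t,i} = Q_h^i\,\mathbf{1}_{i \le l} + h\sum_{j=0}^{l} Q_h^j B\, M_{t-j}^{\,i-j}\,\mathbf{1}_{1 \le i-j \le l}$. Then for every $t \ge 2l$, $x_{t+1} = Q_h^{\,l+1} x_{t-l} + h\sum_{i=0}^{2l} \Psi_{t,i}\, \hat w_{t-i}$. -/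

import Mathlib

lemma mulVec_sum' {d : ℕ} {ι : Type*} (A : Matrix (Fin d) (Fin d) ℝ) (s : Finset ι)
    (f : ι → Fin d → ℝ) : A.mulVec (∑ i ∈ s, f i) = ∑ i ∈ s, A.mulVec (f i) := by
  induction s using Finset.cons_induction with
  | empty => simp
  | cons a s ha ih => simp [Matrix.mulVec_add, ih]

lemma sum_mulVec' {d : ℕ} {ι : Type*} (s : Finset ι) (f : ι → Matrix (Fin d) (Fin d) ℝ)
    (v : Fin d → ℝ) : (∑ i ∈ s, f i).mulVec v = ∑ i ∈ s, (f i).mulVec v := by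
  induction s using Finset.cons_induction with
  | empty => simp
  | cons a s ha ih => simp [Matrix.add_mulVec, ih]

/-- The transfer matrix `Ψ_{t,i}`: the coefficient of the estimated disturbance
`ŵ (t-i)` in the unrolled evolution of the state under the DAC policy.
`Ψ_{t,i} = Q^i 𝟙_{i ≤ l} + h ∑_{j=0}^{l} Q^j B M_{t-j}^{i-j} 𝟙_{1 ≤ i-j ≤ l}`. -/
noncomputable def Psi {d : ℕ} (Q B : Matrix (Fin d) (Fin d) ℝ) (h : ℝ)
    (M : ℕ → ℕ → Matrix (Fin d) (Fin d) ℝ) (l t i : ℕ) : Matrix (Fin d) (Fin d) ℝ :=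
  (if i ≤ l then Q ^ i else 0) +
    h • ∑ j ∈ Finset.range (l + 1),
      (if 1 ≤ i - j ∧ i - j ≤ l then Q ^ j * B * M (t - j) (i - j) else 0)

/-- Unrolled evolution of the state under the Disturbance-Action Policy:
for every `t ≥ 2l`, `x (t+1) = Q^(l+1) x (t-l) + h ∑_{i=0}^{2l} Ψ_{t,i} ŵ (t-i)`. -/
theorem stmt2 {d : ℕ} (A B K : Matrix (Fin d) (Fin d) ℝ) (h : ℝ) (hh : h ≠ 0) (l : ℕ)
    (x u w : ℕ → Fin d → ℝ) (M : ℕ → ℕ → Matrix (Fin d) (Fin d) ℝ)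
    (hw : ∀ t, w t = h⁻¹ • (x (t + 1) - x t - h • (A.mulVec (x t) + B.mulVec (u t))))
    (hu : ∀ t, l ≤ t →
      u t = -(K.mulVec (x t)) + h • ∑ i ∈ Finset.Icc 1 l, (M t i).mulVec (w (t - i)))
    (Q : Matrix (Fin d) (Fin d) ℝ) (hQ : Q = 1 + h • (A - B * K)) :
    ∀ t, 2 * l ≤ t →
      x (t + 1) = (Q ^ (l + 1)).mulVec (x (t - l)) +
        h • ∑ i ∈ Finset.range (2 * l + 1), (Psi Q B h M l t i).mulVec (w (t - i)) := by
  have hstep : ∀ s, l ≤ s → x (s + 1) =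
      Q.mulVec (x s) + (h • w s +
        (h * h) • ∑ i ∈ Finset.Icc 1 l, (B * M s i).mulVec (w (s - i))) := by
    intro s hs
    have h2 : h • w s = x (s + 1) - x s - h • (A.mulVec (x s) + B.mulVec (u s)) := by
      rw [hw s, smul_inv_smul₀ hh]
    have h3 : x (s + 1) = x s + h • (A.mulVec (x s) + B.mulVec (u s)) + h • w s := by
      rw [h2]; abel
    rw [h3, hu s hs, hQ]
    simp only [Matrix.mulVec_add, Matrix.mulVec_neg, Matrix.mulVec_smul, Matrix.add_mulVec,
      Matrix.one_mulVec, Matrix.smul_mulVec, Matrix.sub_mulVec, mulVec_sum',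
      Matrix.mulVec_mulVec, smul_add, smul_sub, smul_smul, Finset.smul_sum]
    module
  intro t ht
  have key : ∀ n, n ≤ l + 1 → x (t + 1) = (Q ^ n).mulVec (x (t + 1 - n)) +
      ∑ j ∈ Finset.range n, (h • (Q ^ j).mulVec (w (t - j)) +
        (h * h) • ∑ i ∈ Finset.Icc 1 l, ((Q ^ j) * (B * M (t - j) i)).mulVec (w (t - j - i))) := by
    intro n hn
    induction n with
    | zero => simp
    | succ n ih =>
      have hnl : n ≤ l := by omega
      rw [ih (by omega)]
      have e1 : t + 1 - n = (t - n) + 1 := by omega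
      rw [e1, hstep (t - n) (by omega)]
      rw [Finset.sum_range_succ]
      have e2 : t + 1 - (n + 1) = t - n := by omega
      rw [e2, pow_succ]
      simp only [Matrix.mulVec_add, Matrix.mulVec_smul, mulVec_sum', Matrix.mulVec_mulVec,
        smul_add, Finset.smul_sum]
      abel
  rw [key (l + 1) le_rfl, show t + 1 - (l + 1) = t - l from by omega]
  congr 1
  have e1 : ∀ k ∈ Finset.range (2 * l + 1), (Psi Q B h M l t k).mulVec (w (t - k)) =
      (if k ≤ l then (Q ^ k).mulVec (w (t - k)) else 0) +
        h • ∑ j ∈ Finset.range (l + 1),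
          (if 1 ≤ k - j ∧ k - j ≤ l then (Q ^ j * B * M (t - j) (k - j)).mulVec (w (t - k))
            else 0) := by
    intro k _
    unfold Psi
    rw [Matrix.add_mulVec, Matrix.smul_mulVec, sum_mulVec']
    congr 1
    · split <;> simp
    · congr 1
      refine Finset.sum_congr rfl fun j _ => ?_
      split <;> simp
  have hRHS : ∑ k ∈ Finset.range (2 * l + 1), (Psi Q B h M l t k).mulVec (w (t - k))
      = (∑ j ∈ Finset.range (l + 1), (Q ^ j).mulVec (w (t - j)))
        + h • ∑ j ∈ Finset.range (l + 1), ∑ i ∈ Finset.Icc 1 l,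
            ((Q ^ j) * (B * M (t - j) i)).mulVec (w (t - j - i)) := by
    rw [Finset.sum_congr rfl e1, Finset.sum_add_distrib]
    congr 1
    · rw [← Finset.sum_subset (Finset.range_subset_range.2 (by omega : l + 1 ≤ 2 * l + 1))
        (fun k _ hk => if_neg (by simp only [Finset.mem_range] at hk; omega))]
      exact Finset.sum_congr rfl fun k hk =>
        if_pos (by simp only [Finset.mem_range] at hk; omega)
    · rw [← Finset.smul_sum]
      congr 1
      rw [Finset.sum_comm]
      refine Finset.sum_congr rfl fun j hj => ?_
      have hj' : j ≤ l := by simpa [Nat.lt_succ_iff] using hj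
      rw [← Finset.sum_subset
        (show Finset.Icc (j + 1) (j + l) ⊆ Finset.range (2 * l + 1) from fun k hk => by
          simp only [Finset.mem_Icc] at hk; simp only [Finset.mem_range]; omega)
        (fun k hk hk' => if_neg (by
          simp only [Finset.mem_range] at hk; simp only [Finset.mem_Icc] at hk'; omega))]
      refine Finset.sum_bij' (fun k _ => k - j) (fun i _ => j + i) ?_ ?_ ?_ ?_ ?_
      · intro a ha; simp only [Finset.mem_Icc] at ha ⊢; omega
      · intro a ha; simp only [Finset.mem_Icc] at ha ⊢; omega
      · intro a ha; simp only [Finset.mem_Icc] at ha; omega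
      · intro a ha; simp only [Finset.mem_Icc] at ha; omega
      · intro a ha
        simp only [Finset.mem_Icc] at ha
        rw [if_pos (by omega), show t - j - (a - j) = t - a from by omega, mul_assoc]
  rw [hRHS, Finset.sum_add_distrib, ← Finset.smul_sum, ← Finset.smul_sum, smul_add,
    smul_smul]
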